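/- With the notation of the Galil–Seiferas-style lemma (A = X₁X₂ = Y₁Y₂ = Z₁Z₂, B = X_Q X̂₂ = Ŷ₁Ŷ₂ = Ẑ₁Z_Q, |X₁| < |Y₁| < |Z₁|, |A| = |B|), let V be the word with Y₁V = Z₁. Then V̂ is a period of Ẑ₁, i.e., Ẑ₁ is a prefix of V̂^k for some k ≥ 1. -/

import Mathlib

inductive Letter | u | d | l | r
deriving DecidableEq, Repr

def Letter.comp : Letter → Letter
  | .u => .d
  | .d => .u
  | .l => .r
  | .r => .l

/-- The backtrack of a word: the letterwise complement of the reverse. -/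
def backtrack (W : List Letter) : List Letter := W.reverse.map Letter.comp

/-- `X` is a period of `W`: `|X| ≤ |W|` and `W` is a prefix of `X^k` for some `k ≥ 1`. -/
def IsPeriodOf (X W : List Letter) : Prop :=
  X.length ≤ W.length ∧ ∃ k, 1 ≤ k ∧ W <+: (List.replicate k X).flatten

lemma backtrack_append (a b : List Letter) :
    backtrack (a ++ b) = backtrack b ++ backtrack a := by
  simp [backtrack]

lemma backtrack_length (a : List Letter) : (backtrack a).length = a.length := by
  simp [backtrack]

lemma join_replicate_succ (n : ℕ) (X : List Letter) :
    (List.replicate (n+1) X).flatten = X ++ (List.replicate n X).flatten := by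
  simp [List.replicate_succ]

lemma prefix_of_prefix_append {α} {p q r : List α} (h : p <+: q ++ r)
    (hl : p.length ≤ q.length) : p <+: q := by
  have h1 : p = (q ++ r).take p.length := List.prefix_iff_eq_take.mp h
  rw [List.take_append_of_le_length hl] at h1
  rw [h1]
  exact List.take_prefix _ _

lemma prefix_pow (X W : List Letter) (h : W <+: X ++ W) :
    ∀ k, W <+: (List.replicate k X).flatten ++ W := by
  intro k
  induction k with
  | zero => simp
  | succ n ih =>
    obtain ⟨t, ht⟩ := ih
    refine h.trans ⟨t, ?_⟩
    rw [join_replicate_succ, List.append_assoc, List.append_assoc, ht]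

theorem backV_period_backZ1 (A B X1 X2 Y1 Y2 Z1 Z2 XQ ZQ V : List Letter)
    (hAB : A.length = B.length)
    (hA1 : A = X1 ++ X2) (hA2 : A = Y1 ++ Y2) (hA3 : A = Z1 ++ Z2)
    (hB1 : B = XQ ++ backtrack X2) (hB2 : B = backtrack Y1 ++ backtrack Y2)
    (hB3 : B = backtrack Z1 ++ ZQ)
    (hXQ : XQ.length = X1.length) (hZQ : ZQ.length = Z2.length)
    (h12 : X1.length < Y1.length) (h23 : Y1.length < Z1.length)
    (hV : Y1 ++ V = Z1) :
    IsPeriodOf (backtrack V) (backtrack Z1) := by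
  have hZ : backtrack Z1 = backtrack V ++ backtrack Y1 := by
    rw [← hV, backtrack_append]
  have hVlen : 1 ≤ V.length := by
    have := h23
    rw [← hV, List.length_append] at this
    omega
  have heq : backtrack Y1 ++ backtrack Y2 = (backtrack V ++ backtrack Y1) ++ ZQ := by
    rw [← hZ, ← hB2, hB3]
  have hpre : backtrack Y1 <+: backtrack V ++ backtrack Y1 :=
    prefix_of_prefix_append ⟨backtrack Y2, heq⟩ (by simp)
  constructor
  · simp only [hZ, backtrack_length, List.length_append]
    omega
  · refine ⟨(backtrack Y1).length + 1, by omega, ?_⟩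
    have h3 := prefix_pow _ _ hpre (backtrack Y1).length
    have h4 : backtrack Z1 <+:
        (List.replicate ((backtrack Y1).length + 1) (backtrack V)).flatten
          ++ backtrack Y1 := by
      rw [hZ, join_replicate_succ, List.append_assoc]
      obtain ⟨t, ht⟩ := h3
      exact ⟨t, by rw [List.append_assoc, ht]⟩
    refine prefix_of_prefix_append h4 ?_
    have hjl : ((List.replicate ((backtrack Y1).length + 1) (backtrack V)).flatten).length
        = ((backtrack Y1).length + 1) * (backtrack V).length := by
      simp [List.length_flatten, Finset.sum_const, mul_comm]
    rw [hZ, List.length_append, hjl, backtrack_length, backtrack_length]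
    nlinarith [hVlen]
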